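/- For every pattern τ without internal dashes (i.e., a factor) of length ℓ, with k = ⌈log₂ ℓ⌉, setting a = (number of occurrences of τ as a factor of the kernel K_ℓ(D_k·1·C_k)) and b = (number of occurrences of τ as a factor of K_ℓ(D_k·2·C_k)), the counts c_n (occurrences of τ as a factor of C_n) and d_n (occurrences in D_n) satisfy, for all n > k+1: c_n = c_{n-1} + d_{n-1} + a and d_n = c_{n-1} + d_{n-1} + b; hence c_n = (a + b + c_{k+1} + d_{k+1})·2^{n-k-2} - b and d_n = (a + b + c_{k+1} + d_{k+1})·2^{n-k-2} - a. -/

import Mathlib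

/-- The pair `(C_n, D_n)` of sigma-words, with `C_0 = D_0 = []`,
`C_{k+1} = C_k · 1 · D_k`, `D_{k+1} = C_k · 2 · D_k`
(so `C_1 = [1]`, `D_1 = [2]`). -/
def sigmaCD : ℕ → List ℕ × List ℕ
  | 0 => ([], [])
  | k + 1 => ((sigmaCD k).1 ++ 1 :: (sigmaCD k).2, (sigmaCD k).1 ++ 2 :: (sigmaCD k).2)

/-- The sigma-word `C_n`. -/
def sigmaC (n : ℕ) : List ℕ := (sigmaCD n).1

/-- The sigma-word `D_n`. -/
def sigmaD (n : ℕ) : List ℕ := (sigmaCD n).2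

/-- Number of occurrences of `p` as a (not necessarily contiguous) subsequence of `w`,
counted with multiplicity of position sets. -/
def subseqCount (p w : List ℕ) : ℕ := (w.sublistsLen p.length).count p

/-- Number of occurrences of `p` as a factor (contiguous subword) of `w`,
i.e. the number of starting positions at which `p` occurs in `w`. -/
def factorCount (p w : List ℕ) : ℕ :=
  (List.range w.length).countP fun i => decide ((w.drop i).take p.length = p)

/-- The kernel of order `ℓ` of a word `W = A · a · B` with `|A| = |B|`:
the `ℓ - 1` rightmost letters of `A`, the letter `a`, and the `ℓ - 1` leftmost
letters of `B`; the empty word if `|A| < ℓ - 1`. -/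
def kernel (ℓ : ℕ) (W : List ℕ) : List ℕ :=
  if W.length / 2 < ℓ - 1 then []
  else (W.drop (W.length / 2 - (ℓ - 1))).take (2 * ℓ - 1)

/- ### Auxiliary counting lemmas -/

lemma countP_range_add (f : ℕ → Bool) (m n : ℕ) :
    (List.range (m + n)).countP f =
      (List.range m).countP f + (List.range n).countP (fun j => f (m + j)) := by
  simp [List.range_add, List.countP_append, List.countP_map]
  rfl

lemma matchAt_false (τ w : List ℕ) (hτ : τ ≠ []) {i : ℕ} (h : w.length < i + τ.length) :
    decide ((w.drop i).take τ.length = τ) = false := by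
  have hl : 0 < τ.length := List.length_pos_iff.2 hτ
  simp only [decide_eq_false_iff_not]
  intro he
  have := congrArg List.length he
  simp [List.length_take, List.length_drop] at this
  omega

lemma countP_range_match (τ w : List ℕ) (hτ : τ ≠ []) {n : ℕ} (h : w.length + 1 - τ.length ≤ n) :
    (List.range n).countP (fun i => decide ((w.drop i).take τ.length = τ)) = factorCount τ w := by
  have hl : 0 < τ.length := List.length_pos_iff.2 hτ
  have key : ∀ e : ℕ, (List.range (w.length + 1 - τ.length + e)).countP
      (fun i => decide ((w.drop i).take τ.length = τ)) =
      (List.range (w.length + 1 - τ.length)).countP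
      (fun i => decide ((w.drop i).take τ.length = τ)) := by
    intro e
    rw [countP_range_add]
    have : (List.range e).countP
        (fun j => decide ((w.drop (w.length + 1 - τ.length + j)).take τ.length = τ)) = 0 := by
      rw [List.countP_eq_zero]
      intro j _
      rw [matchAt_false τ w hτ (by omega)]
      simp
    omega
  obtain ⟨e, he⟩ : ∃ e, n = w.length + 1 - τ.length + e :=
    ⟨n - (w.length + 1 - τ.length), by omega⟩
  obtain ⟨e', he'⟩ : ∃ e', w.length = w.length + 1 - τ.length + e' :=
    ⟨w.length - (w.length + 1 - τ.length), by omega⟩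
  rw [he, key e, factorCount]
  conv_rhs => rw [he', key e']

lemma drop_append_left {A t : List ℕ} {i : ℕ} (h : i ≤ A.length) :
    (A ++ t).drop i = A.drop i ++ t := by
  rw [List.drop_append, Nat.sub_eq_zero_of_le h, List.drop]

lemma take_eq_take_left {A t : List ℕ} {i ℓ : ℕ} (h : i + ℓ ≤ A.length) :
    ((A ++ t).drop i).take ℓ = (A.drop i).take ℓ := by
  rw [drop_append_left (by omega), List.take_append,
    Nat.sub_eq_zero_of_le (by simp; omega), List.take, List.append_nil]

/-- The fundamental splitting lemma: occurrences of `τ` in `A ++ x :: B` are those in `A`,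
those in `B`, and those in the central window of radius `|τ| - 1` around `x`. -/
lemma factorCount_split (τ A B : List ℕ) (x : ℕ) (hτ : τ ≠ [])
    (hA : τ.length - 1 ≤ A.length) (hB : τ.length - 1 ≤ B.length) :
    factorCount τ (A ++ x :: B) =
      factorCount τ A + factorCount τ B +
        factorCount τ (A.drop (A.length - (τ.length - 1)) ++ x :: B.take (τ.length - 1)) := by
  have hl : 0 < τ.length := List.length_pos_iff.2 hτ
  obtain ⟨p, hp⟩ : ∃ p, τ.length = p + 1 := ⟨τ.length - 1, by omega⟩
  have hp1 : τ.length - 1 = p := by omega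
  rw [hp1] at hA hB ⊢
  set w := A ++ x :: B with hw
  set W := A.drop (A.length - p) ++ x :: B.take p with hW
  have hwlen : w.length = A.length + B.length + 1 := by simp [hw]; omega
  have hWmid : w.drop (A.length - p) = A.drop (A.length - p) ++ x :: B := by
    rw [hw, drop_append_left (by omega)]
  have hlenAd : (A.drop (A.length - p)).length = p := by simp; omega
  have hWeq : W = (w.drop (A.length - p)).take (2 * p + 1) := by
    rw [hWmid, List.take_append, hlenAd,
      List.take_of_length_le (by rw [hlenAd]; omega)]
    have h2 : 2 * p + 1 - p = p + 1 := by omega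
    rw [h2, List.take_cons (by omega)]
    simp [hW]
  have hWlen : W.length = 2 * p + 1 := by
    simp [hW, hlenAd]
    omega
  have hsplit : w.length = (A.length - p) + ((p + 1) + B.length) := by omega
  rw [factorCount, hsplit, countP_range_add, countP_range_add]
  have e1 : (List.range (A.length - p)).countP
      (fun i => decide ((w.drop i).take τ.length = τ)) = factorCount τ A := by
    rw [← countP_range_match τ A hτ (n := A.length - p) (by omega)]
    apply List.countP_congr
    intro i hi
    rw [List.mem_range] at hi
    rw [hw, take_eq_take_left (by omega)]
  have e2 : (List.range (p + 1)).countP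
      (fun j => decide ((w.drop (A.length - p + j)).take τ.length = τ)) = factorCount τ W := by
    rw [← countP_range_match τ W hτ (n := p + 1) (by rw [hWlen, hp]; omega)]
    apply List.countP_congr
    intro j hj
    rw [List.mem_range] at hj
    have h3 : (W.drop j).take τ.length = (w.drop (A.length - p + j)).take τ.length := by
      rw [hWeq, List.drop_take, List.take_take, List.drop_drop, hp,
        Nat.min_eq_left (by omega)]
    rw [h3]
  have e3 : (List.range B.length).countP
      (fun j => decide ((w.drop (A.length - p + ((p + 1) + j))).take τ.length = τ))
      = factorCount τ B := by
    rw [← countP_range_match τ B hτ (n := B.length) (by omega)]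
    apply List.countP_congr
    intro j hj
    have h4 : w.drop (A.length - p + ((p + 1) + j)) = B.drop j := by
      have h5 : A.length - p + ((p + 1) + j) = A.length + (j + 1) := by omega
      rw [hw, h5, ← List.drop_drop, List.drop_left, List.drop_succ_cons]
    rw [h4]
  rw [e1, e2, e3]
  omega

/- ### Structure of the sigma-words -/

lemma sigmaC_succ (n : ℕ) : sigmaC (n + 1) = sigmaC n ++ 1 :: sigmaD n := rfl
lemma sigmaD_succ (n : ℕ) : sigmaD (n + 1) = sigmaC n ++ 2 :: sigmaD n := rfl

lemma sigma_length (n : ℕ) : (sigmaC n).length = 2 ^ n - 1 ∧ (sigmaD n).length = 2 ^ n - 1 := by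
  induction n with
  | zero => simp [sigmaC, sigmaD, sigmaCD]
  | succ n ih =>
    have h : 1 ≤ 2 ^ n := Nat.one_le_two_pow
    rw [sigmaC_succ, sigmaD_succ]
    simp [List.length_append, ih.1, ih.2, pow_succ]
    omega

lemma sigma_take {k t : ℕ} (ht : t ≤ 2 ^ k - 1) :
    ∀ m, k < m → (sigmaC m).take t = (sigmaC k).take t ∧ (sigmaD m).take t = (sigmaC k).take t := by
  intro m
  induction m with
  | zero => omega
  | succ m ih =>
    intro h
    have hkm : k ≤ m := by omega
    have hlen : t ≤ (sigmaC m).length := by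
      rw [(sigma_length m).1]
      have := Nat.pow_le_pow_right (by norm_num : 0 < 2) hkm (i := k) (j := m)
      omega
    rw [sigmaC_succ, sigmaD_succ, List.take_append_of_le_length hlen,
      List.take_append_of_le_length hlen]
    rcases Nat.eq_or_lt_of_le hkm with h | h
    · subst h; exact ⟨rfl, rfl⟩
    · exact ⟨(ih h).1, (ih h).1⟩

lemma drop_suffix_append (A Bl : List ℕ) (y t : ℕ) (h : t ≤ Bl.length) :
    (A ++ y :: Bl).drop ((A ++ y :: Bl).length - t) = Bl.drop (Bl.length - t) := by
  have hlen : (A ++ y :: Bl).length = A.length + Bl.length + 1 := by simp; omega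
  rw [hlen, List.drop_append, List.drop_eq_nil_of_le (by omega), List.nil_append]
  have h2 : A.length + Bl.length + 1 - t - A.length = (Bl.length - t) + 1 := by omega
  rw [h2, List.drop_succ_cons]

lemma sigma_drop {k t : ℕ} (ht : t ≤ 2 ^ k - 1) :
    ∀ m, k < m →
      (sigmaC m).drop ((sigmaC m).length - t) = (sigmaD k).drop ((sigmaD k).length - t) ∧
      (sigmaD m).drop ((sigmaD m).length - t) = (sigmaD k).drop ((sigmaD k).length - t) := by
  intro m
  induction m with
  | zero => omega
  | succ m ih =>
    intro h
    have hkm : k ≤ m := by omega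
    have hlen : t ≤ (sigmaD m).length := by
      rw [(sigma_length m).2]
      have := Nat.pow_le_pow_right (by norm_num : 0 < 2) hkm (i := k) (j := m)
      omega
    rw [sigmaC_succ, sigmaD_succ, drop_suffix_append _ _ _ _ hlen,
      drop_suffix_append _ _ _ _ hlen]
    rcases Nat.eq_or_lt_of_le hkm with h | h
    · subst h; exact ⟨rfl, rfl⟩
    · exact ⟨(ih h).2, (ih h).2⟩

lemma kernel_eq (k ℓ x : ℕ) (h1 : 1 ≤ ℓ) (h2 : ℓ ≤ 2 ^ k) :
    kernel ℓ (sigmaD k ++ x :: sigmaC k) =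
      (sigmaD k).drop ((sigmaD k).length - (ℓ - 1)) ++ x :: (sigmaC k).take (ℓ - 1) := by
  have hD := (sigma_length k).2
  have hC := (sigma_length k).1
  have hpow : 1 ≤ 2 ^ k := Nat.one_le_two_pow
  have hlen : (sigmaD k ++ x :: sigmaC k).length = 2 * 2 ^ k - 1 := by simp [hD, hC]; omega
  have hhalf : (sigmaD k ++ x :: sigmaC k).length / 2 = 2 ^ k - 1 := by rw [hlen]; omega
  rw [kernel, hhalf, if_neg (by omega)]
  rw [drop_append_left (by omega), List.take_append]
  have hld : (List.drop (2 ^ k - 1 - (ℓ - 1)) (sigmaD k)).length = ℓ - 1 := by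
    rw [List.length_drop, hD]; omega
  rw [List.take_of_length_le (by rw [hld]; omega), hld, hD]
  have h3 : 2 * ℓ - 1 - (ℓ - 1) = ℓ := by omega
  rw [h3, List.take_cons (by omega)]

/- ### Main theorem, explicit version -/

theorem factor_recurrence_aux (τ : List ℕ) (hτ : τ ≠ []) (n : ℕ)
    (hn : Nat.clog 2 τ.length + 1 < n) :
    factorCount τ (sigmaC n) =
        factorCount τ (sigmaC (n - 1)) + factorCount τ (sigmaD (n - 1)) +
          factorCount τ (kernel τ.length
            (sigmaD (Nat.clog 2 τ.length) ++ 1 :: sigmaC (Nat.clog 2 τ.length))) ∧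
    factorCount τ (sigmaD n) =
        factorCount τ (sigmaC (n - 1)) + factorCount τ (sigmaD (n - 1)) +
          factorCount τ (kernel τ.length
            (sigmaD (Nat.clog 2 τ.length) ++ 2 :: sigmaC (Nat.clog 2 τ.length))) ∧
    factorCount τ (sigmaC n) =
        (factorCount τ (kernel τ.length
            (sigmaD (Nat.clog 2 τ.length) ++ 1 :: sigmaC (Nat.clog 2 τ.length))) +
          factorCount τ (kernel τ.length
            (sigmaD (Nat.clog 2 τ.length) ++ 2 :: sigmaC (Nat.clog 2 τ.length))) +
          factorCount τ (sigmaC (Nat.clog 2 τ.length + 1)) +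
          factorCount τ (sigmaD (Nat.clog 2 τ.length + 1))) *
            2 ^ (n - Nat.clog 2 τ.length - 2) -
          factorCount τ (kernel τ.length
            (sigmaD (Nat.clog 2 τ.length) ++ 2 :: sigmaC (Nat.clog 2 τ.length))) ∧
    factorCount τ (sigmaD n) =
        (factorCount τ (kernel τ.length
            (sigmaD (Nat.clog 2 τ.length) ++ 1 :: sigmaC (Nat.clog 2 τ.length))) +
          factorCount τ (kernel τ.length
            (sigmaD (Nat.clog 2 τ.length) ++ 2 :: sigmaC (Nat.clog 2 τ.length))) +
          factorCount τ (sigmaC (Nat.clog 2 τ.length + 1)) +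
          factorCount τ (sigmaD (Nat.clog 2 τ.length + 1))) *
            2 ^ (n - Nat.clog 2 τ.length - 2) -
          factorCount τ (kernel τ.length
            (sigmaD (Nat.clog 2 τ.length) ++ 1 :: sigmaC (Nat.clog 2 τ.length))) := by
  set k := Nat.clog 2 τ.length with hk
  set a := factorCount τ (kernel τ.length (sigmaD k ++ 1 :: sigmaC k)) with ha
  set b := factorCount τ (kernel τ.length (sigmaD k ++ 2 :: sigmaC k)) with hb
  have hl1 : 1 ≤ τ.length := List.length_pos_iff.2 hτ
  have hlk : τ.length ≤ 2 ^ k := Nat.le_pow_clog (by norm_num) τ.length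
  have ht : τ.length - 1 ≤ 2 ^ k - 1 := by omega
  -- the recurrence step
  have step : ∀ m, k < m →
      factorCount τ (sigmaC (m + 1)) =
        factorCount τ (sigmaC m) + factorCount τ (sigmaD m) + a ∧
      factorCount τ (sigmaD (m + 1)) =
        factorCount τ (sigmaC m) + factorCount τ (sigmaD m) + b := by
    intro m hm
    have hpm := Nat.pow_le_pow_right (by norm_num : 0 < 2) (le_of_lt hm) (n := 2)
    have hA : τ.length - 1 ≤ (sigmaC m).length := by rw [(sigma_length m).1]; omega
    have hB : τ.length - 1 ≤ (sigmaD m).length := by rw [(sigma_length m).2]; omega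
    constructor
    · rw [sigmaC_succ, factorCount_split τ _ _ 1 hτ hA hB,
        (sigma_drop ht m hm).1, (sigma_take ht m hm).2, ← kernel_eq k τ.length 1 hl1 hlk, ← ha]
    · rw [sigmaD_succ, factorCount_split τ _ _ 2 hτ hA hB,
        (sigma_drop ht m hm).1, (sigma_take ht m hm).2, ← kernel_eq k τ.length 2 hl1 hlk, ← hb]
  set M := a + b + factorCount τ (sigmaC (k + 1)) + factorCount τ (sigmaD (k + 1)) with hM
  -- the closed form
  have closed : ∀ m, k + 2 ≤ m →
      factorCount τ (sigmaC m) = M * 2 ^ (m - k - 2) - b ∧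
      factorCount τ (sigmaD m) = M * 2 ^ (m - k - 2) - a := by
    intro m hm
    induction m, hm using Nat.le_induction with
    | base =>
      have s := step (k + 1) (by omega)
      have h0 : k + 2 - k - 2 = 0 := by omega
      rw [h0, pow_zero, Nat.mul_one, s.1, s.2]
      omega
    | succ m hm ih =>
      have s := step m (by omega)
      have he : m + 1 - k - 2 = (m - k - 2) + 1 := by omega
      rw [he, pow_succ, s.1, s.2, ih.1, ih.2]
      have hX : M * (2 ^ (m - k - 2) * 2) = M * 2 ^ (m - k - 2) + M * 2 ^ (m - k - 2) := by ring
      rw [hX]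
      obtain ⟨X, hXd⟩ : ∃ X, M * 2 ^ (m - k - 2) = X := ⟨_, rfl⟩
      rw [hXd]
      have hpos : 0 < 2 ^ (m - k - 2) := Nat.pow_pos (by norm_num)
      have hbX : b ≤ X := by
        rw [← hXd]
        calc b ≤ M := by omega
        _ ≤ M * 2 ^ (m - k - 2) := Nat.le_mul_of_pos_right M hpos
      have haX : a ≤ X := by
        rw [← hXd]
        calc a ≤ M := by omega
        _ ≤ M * 2 ^ (m - k - 2) := Nat.le_mul_of_pos_right M hpos
      omega
  have s := step (n - 1) (by omega)
  have hco := closed n (by omega)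
  have h1 : n - 1 + 1 = n := by omega
  rw [h1] at s
  exact ⟨s.1, s.2, hco.1, hco.2⟩

theorem factor_recurrence (τ : List ℕ) (hτ : τ ≠ []) (hlet : ∀ x ∈ τ, x = 1 ∨ x = 2) :
    ∀ n : ℕ, Nat.clog 2 τ.length + 1 < n →
      let ℓ := τ.length
      let k := Nat.clog 2 ℓ
      let a := factorCount τ (kernel ℓ (sigmaD k ++ 1 :: sigmaC k))
      let b := factorCount τ (kernel ℓ (sigmaD k ++ 2 :: sigmaC k))
      factorCount τ (sigmaC n) =
          factorCount τ (sigmaC (n - 1)) + factorCount τ (sigmaD (n - 1)) + a ∧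
      factorCount τ (sigmaD n) =
          factorCount τ (sigmaC (n - 1)) + factorCount τ (sigmaD (n - 1)) + b ∧
      factorCount τ (sigmaC n) =
          (a + b + factorCount τ (sigmaC (k + 1)) + factorCount τ (sigmaD (k + 1))) *
            2 ^ (n - k - 2) - b ∧
      factorCount τ (sigmaD n) =
          (a + b + factorCount τ (sigmaC (k + 1)) + factorCount τ (sigmaD (k + 1))) *
            2 ^ (n - k - 2) - a := by
  intro n hn
  exact factor_recurrence_aux τ hτ n hn
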